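/- Let N ≥ 2, fix an index i, and for each agent k = 1,…,N let δ_k ≥ 0 be its synchronization error and t_rs^k the start time (on agent k's clock) of its reachable set, all valid for duration T > 0. Let t be a global time and for each k let s_k be agent k's local reading at global time t, with |s_k − t| ≤ δ_k. If s_i ≤ T + min_{j ≠ i} (t_rs^j − δ_i − δ_j), then s_i ≤ t_rs^i + T and for every j ≠ i one has s_j ≤ t_rs^j + T, provided also t_rs^i ≥ min_{j ≠ i}(t_rs^j − δ_i − δ_j). (That is, up to the stated local deadline, every agent's reachable set in the globally useful reachable set is still valid on that agent's own clock.) -/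
import Mathlib


/-- Validity of the globally useful reachable set: up to the local deadline
`T + min_{j ≠ i} (t_rs^j - δ_i - δ_j)` on agent i's clock, every agent's reachable set
is still valid on that agent's own clock (assuming also
`t_rs^i ≥ min_{j ≠ i}(t_rs^j - δ_i - δ_j)`). -/
theorem globally_useful_reachable_set_valid
    (N : ℕ) (hN : 2 ≤ N) (i : Fin N)
    (δ trs : Fin N → ℝ) (hδ : ∀ k, 0 ≤ δ k)
    (T : ℝ) (hT : 0 < T)
    (t : ℝ) (s : Fin N → ℝ)
    (hs : ∀ k, |s k - t| ≤ δ k)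
    (h : s i ≤ T + ⨅ j : {j : Fin N // j ≠ i}, (trs j - δ i - δ j))
    (hcond : trs i ≥ ⨅ j : {j : Fin N // j ≠ i}, (trs j - δ i - δ j)) :
    s i ≤ trs i + T ∧ ∀ j : Fin N, j ≠ i → s j ≤ trs j + T := by
  have hbdd : BddBelow (Set.range fun j : {j : Fin N // j ≠ i} => trs j - δ i - δ j) :=
    (Set.finite_range _).bddBelow
  constructor
  · linarith
  · intro j hj
    have hle : (⨅ j : {j : Fin N // j ≠ i}, (trs j - δ i - δ j)) ≤ trs j - δ i - δ j :=
      ciInf_le hbdd ⟨j, hj⟩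
    have h1 := abs_le.mp (hs j)
    have h2 := abs_le.mp (hs i)
    linarith
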